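/- The group F₂ × ℤ does not satisfy the Howson property: there exist finitely generated subgroups H, H' of F₂ × ℤ whose intersection is not finitely generated. -/

import Mathlib

open SemidirectProduct Multiplicative

abbrev A := Multiplicative (ℤ →₀ ZMod 2)

noncomputable def shiftA (m : ℤ) : A ≃* A :=
  AddEquiv.toMultiplicative (Finsupp.domCongr (Equiv.addRight m))

lemma shiftA_apply (m : ℤ) (x : A) (k : ℤ) :
    Multiplicative.toAdd (shiftA m x) k = Multiplicative.toAdd x (k - m) := by
  simp [shiftA, Finsupp.domCongr_apply, AddEquiv.toMultiplicative, sub_eq_add_neg]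

noncomputable def sh : Multiplicative ℤ →* MulAut A where
  toFun m := shiftA m.toAdd
  map_one' := MulEquiv.ext fun x => Multiplicative.toAdd.injective (Finsupp.ext fun k => by
    simp [shiftA_apply])
  map_mul' m n := MulEquiv.ext fun x => Multiplicative.toAdd.injective (Finsupp.ext fun k => by
    simp only [MulAut.mul_apply, shiftA_apply, toAdd_mul, MulAut.one_apply]
    ring_nf)

abbrev Lamp := A ⋊[sh] Multiplicative ℤ

noncomputable def fF : FreeGroup Bool →* Lamp :=
  FreeGroup.lift (fun x => if x then inr (ofAdd (1 : ℤ))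
    else inl (ofAdd (Finsupp.single (0 : ℤ) (1 : ZMod 2))))

def phiF : FreeGroup Bool →* Multiplicative ℤ :=
  FreeGroup.lift (fun x => if x then ofAdd (1 : ℤ) else 1)

lemma right_fF (w : FreeGroup Bool) : rightHom (fF w) = phiF w := by
  have : rightHom.comp fF = phiF := by
    apply FreeGroup.ext_hom
    intro a
    cases a <;> simp [fF, phiF]
  exact DFunLike.congr_fun this w

instance : Group.FG (FreeGroup Bool) :=
  ⟨(Subgroup.fg_iff ⊤).2 ⟨Set.range FreeGroup.of, FreeGroup.closure_range_of Bool,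
    Set.finite_range _⟩⟩

theorem stmt2 :
    ∃ H H' : Subgroup (FreeGroup Bool × Multiplicative ℤ),
      H.FG ∧ H'.FG ∧ ¬ (H ⊓ H').FG := by
  set F := FreeGroup Bool
  set g : F →* F × Multiplicative ℤ := (MonoidHom.id F).prod phiF with hg
  refine ⟨(MonoidHom.inl F (Multiplicative ℤ)).range, g.range, ?_, ?_, ?_⟩
  · exact (Group.fg_iff_subgroup_fg _).1 inferInstance
  · exact (Group.fg_iff_subgroup_fg _).1 inferInstance
  · rintro ⟨S, hS⟩
    set q : F × Multiplicative ℤ →* Lamp := fF.comp (MonoidHom.fst F (Multiplicative ℤ)) with hq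
    -- pick n outside all supports
    obtain ⟨n, hn⟩ := Infinite.exists_notMem_finset
      (S.biUnion fun s => (Multiplicative.toAdd (fF s.1).left).support)
    -- the subgroup L of the lamplighter
    set L : Subgroup Lamp :=
      { carrier := {x | x.right = 1 ∧ Multiplicative.toAdd x.left n = 0}
        one_mem' := by simp
        mul_mem' := by
          rintro x y ⟨hx1, hx2⟩ ⟨hy1, hy2⟩
          constructor
          · simp [hx1, hy1]
          · simp [hx1, hx2, hy2]
        inv_mem' := by
          rintro x ⟨hx1, hx2⟩
          constructor
          · simp [hx1]
          · simp [hx1, hx2] } with hL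
    -- elements of H ⊓ H' satisfy: second coord 1 and phiF of first coord = 1
    have hmem : ∀ s : F × Multiplicative ℤ,
        s ∈ (MonoidHom.inl F (Multiplicative ℤ)).range ⊓ g.range →
        s.2 = 1 ∧ phiF s.1 = 1 := by
      rintro s ⟨⟨w, hw⟩, ⟨v, hv⟩⟩
      have h2 : s.2 = 1 := by rw [← hw]; rfl
      have h1 : phiF s.1 = s.2 := by
        rw [← hv]; simp [hg]
      exact ⟨h2, h1.trans h2⟩
    have hle : Subgroup.closure (↑S : Set (F × Multiplicative ℤ)) ≤ Subgroup.comap q L := by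
      rw [Subgroup.closure_le]
      intro s hs
      have hsm := hmem s (hS ▸ Subgroup.subset_closure hs)
      constructor
      · show (fF s.1).right = 1
        have := right_fF s.1
        simp only [rightHom_eq_right] at this
        rw [this, hsm.2]
      · show Multiplicative.toAdd (fF s.1).left n = 0
        have : n ∉ (Multiplicative.toAdd (fF s.1).left).support := by
          intro h
          exact hn (Finset.mem_biUnion.2 ⟨s, hs, h⟩)
        exact Finsupp.notMem_support_iff.1 this
    -- the witness element
    set c : F := FreeGroup.of true ^ n * FreeGroup.of false * FreeGroup.of true ^ (-n) with hc
    have hphic : phiF c = 1 := by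
      simp [hc, phiF, zpow_neg]
    have hcmem : (c, (1 : Multiplicative ℤ)) ∈
        (MonoidHom.inl F (Multiplicative ℤ)).range ⊓ g.range := by
      constructor
      · exact ⟨c, rfl⟩
      · exact ⟨c, by simp [hg, hphic]⟩
    have hcl : (c, (1 : Multiplicative ℤ)) ∈ Subgroup.closure (↑S : Set (F × Multiplicative ℤ)) :=
      hS ▸ hcmem
    have hcL := hle hcl
    -- compute fF c
    have hfc : fF c = inl (sh (ofAdd n) (ofAdd (Finsupp.single (0 : ℤ) (1 : ZMod 2)))) := by
    -- fF c = inr(t)^n * inl u * inr(t)^{-n}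
      rw [hc]
      simp only [map_mul, map_zpow, fF, FreeGroup.lift_apply_of, if_true, Bool.false_eq_true, if_false]
      have ht : (ofAdd (1:ℤ)) ^ n = ofAdd n := by
        rw [← ofAdd_toAdd ((ofAdd (1:ℤ)) ^ n)]
        congr 1
        simp
      rw [← map_zpow inr, ← map_zpow inr, zpow_neg, ← inl_aut, ht]
    have : Multiplicative.toAdd (fF c).left n = 0 := hcL.2
    rw [hfc] at this
    simp only [left_inl] at this
    have heval : Multiplicative.toAdd
        ((sh (ofAdd n)) (ofAdd (Finsupp.single (0 : ℤ) (1 : ZMod 2)))) n = 1 := by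
      show Multiplicative.toAdd ((shiftA n) (ofAdd (Finsupp.single (0 : ℤ) (1 : ZMod 2)))) n = 1
      rw [shiftA_apply, toAdd_ofAdd, sub_self, Finsupp.single_eq_same]
    rw [heval] at this
    exact one_ne_zero this
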